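/- Let n ≥ 0 and a_1, …, a_{n+1} > 0, and set a := Σ_{i=1}^{n+1} a_i. For y ∈ (0,∞)^{n+1} define the operator L f := Σ_{i=1}^{n+1} ( y_i ∂_i^2 f + (a_i − y_i) ∂_i f ) and the bilinear form Γ(f,g) := Σ_{i=1}^{n+1} y_i (∂_i f)(∂_i g). With S(y) := Σ_{i=1}^{n+1} y_i and z_i(y) := y_i / S(y), the following identities hold pointwise on (0,∞)^{n+1}: (1) L S = a − S; (2) L z_i = (a_i − a z_i)/S; (3) Γ(S, S) = S; (4) Γ(S, z_i) = 0; (5) Γ(z_i, z_j) = (δ_{ij} z_i − z_i z_j)/S. -/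

import Mathlib

open Finset
open Topology Filter

/-- Partial derivative `∂_i f` on `ℝ^m`. -/
noncomputable def pderiv4 {m : ℕ} (i : Fin m) (f : (Fin m → ℝ) → ℝ) (y : Fin m → ℝ) : ℝ :=
  fderiv ℝ f y (Pi.single i 1)

/-- The generator of `n+1` independent Laguerre processes with parameters `a_i`. -/
noncomputable def Lag4 {n : ℕ} (a : Fin (n + 1) → ℝ) (f : (Fin (n + 1) → ℝ) → ℝ)
    (y : Fin (n + 1) → ℝ) : ℝ :=
  ∑ i, (y i * pderiv4 i (pderiv4 i f) y + (a i - y i) * pderiv4 i f y)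

/-- The carré du champ of the Laguerre generator. -/
noncomputable def GammaLag4 {n : ℕ} (f g : (Fin (n + 1) → ℝ) → ℝ)
    (y : Fin (n + 1) → ℝ) : ℝ :=
  ∑ i, y i * pderiv4 i f y * pderiv4 i g y

noncomputable def Lsum (m : ℕ) : (Fin m → ℝ) →L[ℝ] ℝ := ∑ k, ContinuousLinearMap.proj k

lemma Lsum_apply {m : ℕ} (v : Fin m → ℝ) : Lsum m v = ∑ k, v k := by
  simp [Lsum]

lemma Lsum_single {m : ℕ} (j : Fin m) : Lsum m (Pi.single j 1) = 1 := by
  simp [Lsum_apply, Pi.single_apply]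

lemma hasFDerivAt_sum {m : ℕ} (y : Fin m → ℝ) :
    HasFDerivAt (fun y' : Fin m → ℝ => ∑ k, y' k) (Lsum m) y := by
  have h := (Lsum m).hasFDerivAt (x := y)
  have : ⇑(Lsum m) = fun y' : Fin m → ℝ => ∑ k, y' k := funext fun v => Lsum_apply v
  rwa [this] at h

lemma pderiv_sum {m : ℕ} (j : Fin m) (y : Fin m → ℝ) :
    pderiv4 j (fun y' => ∑ k, y' k) y = 1 := by
  rw [pderiv4, (hasFDerivAt_sum y).fderiv, Lsum_single]

lemma pderiv2_sum {m : ℕ} (j : Fin m) (y : Fin m → ℝ) :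
    pderiv4 j (pderiv4 j (fun y' => ∑ k, y' k)) y = 0 := by
  have h : (pderiv4 j (fun y' : Fin m → ℝ => ∑ k, y' k)) = fun _ => (1:ℝ) :=
    funext fun v => pderiv_sum j v
  rw [pderiv4, h]
  simp


lemma hasFDerivAt_inv_sum {m : ℕ} (y : Fin m → ℝ) (hS : (∑ k, y k) ≠ 0) :
    HasFDerivAt (fun y' : Fin m → ℝ => (∑ k, y' k)⁻¹)
      ((-ContinuousLinearMap.mulLeftRight ℝ ℝ (∑ k, y k)⁻¹ (∑ k, y k)⁻¹).comp (Lsum m)) y := by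
  have h := (hasFDerivAt_inv' (𝕜 := ℝ) hS).comp y (hasFDerivAt_sum y)
  exact h

lemma pderiv_z {m : ℕ} (i j : Fin m) (y : Fin m → ℝ) (hS : (∑ k, y k) ≠ 0) :
    pderiv4 j (fun y' => y' i / ∑ k, y' k) y
      = ((if i = j then 1 else 0) * (∑ k, y k) - y i) / (∑ k, y k) ^ 2 := by
  have hproj : HasFDerivAt (fun y' : Fin m → ℝ => y' i) (ContinuousLinearMap.proj (R := ℝ) (φ := fun _ : Fin m => ℝ) i) y :=
    by exact (ContinuousLinearMap.proj (R := ℝ) (φ := fun _ : Fin m => ℝ) i).hasFDerivAt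
  have hz : HasFDerivAt (fun y' : Fin m → ℝ => y' i * (∑ k, y' k)⁻¹)
      ((y i) • ((-ContinuousLinearMap.mulLeftRight ℝ ℝ (∑ k, y k)⁻¹ (∑ k, y k)⁻¹).comp (Lsum m))
        + (∑ k, y k)⁻¹ • ContinuousLinearMap.proj (R := ℝ) (φ := fun _ : Fin m => ℝ) i) y :=
    hproj.mul (hasFDerivAt_inv_sum y hS)
  simp only [pderiv4, div_eq_mul_inv]
  rw [hz.fderiv]
  simp [ContinuousLinearMap.mulLeftRight_apply, Lsum_single, Pi.single_apply, eq_comm (a := i)]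
  by_cases h : j = i
  · simp only [h, ↓reduceIte]; field_simp
    ring
  · simp only [h, ↓reduceIte]; field_simp
    ring

lemma pderiv2_z {m : ℕ} (i j : Fin m) (y : Fin m → ℝ) (hS : 0 < ∑ k, y k) :
    pderiv4 j (pderiv4 j (fun y' => y' i / ∑ k, y' k)) y
      = -2 * ((if i = j then 1 else 0) * (∑ k, y k) - y i) / (∑ k, y k) ^ 3 := by
  set δ : ℝ := if i = j then 1 else 0 with hδ
  have hcont : ContinuousAt (fun y' : Fin m → ℝ => ∑ k, y' k) y := by fun_prop
  have hev : ∀ᶠ y' in 𝓝 y, (∑ k, y' k) ≠ 0 := hcont.eventually_ne hS.ne'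
  have heq : (pderiv4 j fun y' : Fin m → ℝ => y' i / ∑ k, y' k) =ᶠ[𝓝 y]
      (fun y' => (δ * (∑ k, y' k) - y' i) * ((∑ k, y' k)⁻¹ * (∑ k, y' k)⁻¹)) := by
    filter_upwards [hev] with y' h
    rw [pderiv_z i j y' h, div_eq_mul_inv, sq, mul_inv]
  rw [pderiv4, heq.fderiv_eq]
  have hproj : HasFDerivAt (fun y' : Fin m → ℝ => y' i)
      (ContinuousLinearMap.proj (R := ℝ) (φ := fun _ : Fin m => ℝ) i) y :=
    by exact (ContinuousLinearMap.proj (R := ℝ) (φ := fun _ : Fin m => ℝ) i).hasFDerivAt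
  have hN : HasFDerivAt (fun y' : Fin m → ℝ => δ * (∑ k, y' k) - y' i)
      (δ • Lsum m - ContinuousLinearMap.proj (R := ℝ) (φ := fun _ : Fin m => ℝ) i) y :=
    ((hasFDerivAt_sum y).const_mul δ).sub hproj
  have hinv := hasFDerivAt_inv_sum y hS.ne'
  have hinv2 : HasFDerivAt (fun y' : Fin m → ℝ => (∑ k, y' k)⁻¹ * (∑ k, y' k)⁻¹)
      ((∑ k, y k)⁻¹ • ((-ContinuousLinearMap.mulLeftRight ℝ ℝ (∑ k, y k)⁻¹ (∑ k, y k)⁻¹).comp (Lsum m))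
        + (∑ k, y k)⁻¹ • ((-ContinuousLinearMap.mulLeftRight ℝ ℝ (∑ k, y k)⁻¹ (∑ k, y k)⁻¹).comp (Lsum m))) y :=
    hinv.mul hinv
  have hg : HasFDerivAt (fun y' : Fin m → ℝ => (δ * (∑ k, y' k) - y' i) * ((∑ k, y' k)⁻¹ * (∑ k, y' k)⁻¹))
      ((δ * (∑ k, y k) - y i) •
          ((∑ k, y k)⁻¹ • ((-ContinuousLinearMap.mulLeftRight ℝ ℝ (∑ k, y k)⁻¹ (∑ k, y k)⁻¹).comp (Lsum m))
            + (∑ k, y k)⁻¹ • ((-ContinuousLinearMap.mulLeftRight ℝ ℝ (∑ k, y k)⁻¹ (∑ k, y k)⁻¹).comp (Lsum m)))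
        + ((∑ k, y k)⁻¹ * (∑ k, y k)⁻¹) •
            (δ • Lsum m - ContinuousLinearMap.proj (R := ℝ) (φ := fun _ : Fin m => ℝ) i)) y :=
    hN.mul hinv2
  rw [hg.fderiv]
  simp [Lsum, ContinuousLinearMap.mulLeftRight_apply, ContinuousLinearMap.sum_apply,
    ContinuousLinearMap.proj_apply, Pi.single_apply, eq_comm (a := i), hδ]
  by_cases h : j = i
  · simp [h, ContinuousLinearMap.sum_apply, Pi.single_apply]; field_simp
    ring
  · simp [h, ContinuousLinearMap.sum_apply, Pi.single_apply]; field_simp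
    ring

lemma sum_ite_split {m : ℕ} (i : Fin m) (F : Fin m → ℝ → ℝ) :
    ∑ j, F j (if i = j then 1 else 0) = F i 1 - F i 0 + ∑ j, F j 0 := by
  have h : ∀ j, F j (if i = j then 1 else 0)
      = (if i = j then F j 1 - F j 0 else 0) + F j 0 := by
    intro j; by_cases h : i = j <;> simp [h]
  rw [Finset.sum_congr rfl fun j _ => h j, Finset.sum_add_distrib, Finset.sum_ite_eq]
  simp


/-- The warped-product identities for `S = Σ y_i` and `z_i = y_i / S` under the
Laguerre generator, valid pointwise on `(0,∞)^{n+1}`. -/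
theorem stmt_4 (n : ℕ) (a : Fin (n + 1) → ℝ) (ha : ∀ i, 0 < a i)
    (y : Fin (n + 1) → ℝ) (hy : ∀ i, 0 < y i) :
    (Lag4 a (fun y' => ∑ i, y' i) y = (∑ i, a i) - ∑ i, y i)
    ∧ (∀ i, Lag4 a (fun y' => y' i / ∑ k, y' k) y
        = (a i - (∑ k, a k) * (y i / ∑ k, y k)) / ∑ k, y k)
    ∧ (GammaLag4 (fun y' => ∑ i, y' i) (fun y' => ∑ i, y' i) y = ∑ i, y i)
    ∧ (∀ i, GammaLag4 (fun y' => ∑ k, y' k) (fun y' => y' i / ∑ k, y' k) y = 0)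
    ∧ (∀ i j, GammaLag4 (fun y' => y' i / ∑ k, y' k) (fun y' => y' j / ∑ k, y' k) y
        = ((if i = j then y i / ∑ k, y k else 0)
            - (y i / ∑ k, y k) * (y j / ∑ k, y k)) / ∑ k, y k) := by
  have hS : 0 < ∑ k, y k := Finset.sum_pos (fun i _ => hy i) Finset.univ_nonempty
  refine ⟨?_, ?_, ?_, ?_, ?_⟩
  · unfold Lag4
    simp [pderiv_sum, pderiv2_sum, Finset.sum_sub_distrib]
  · intro i
    unfold Lag4
    rw [Finset.sum_congr rfl fun j _ => by rw [pderiv2_z i j y hS, pderiv_z i j y hS.ne']]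
    rw [sum_ite_split i (fun j t => y j * (-2 * (t * (∑ k, y k) - y i) / (∑ k, y k) ^ 3)
      + (a j - y j) * ((t * (∑ k, y k) - y i) / (∑ k, y k) ^ 2))]
    rw [Finset.sum_add_distrib, ← Finset.sum_mul, ← Finset.sum_mul, Finset.sum_sub_distrib]
    field_simp
    ring
  · unfold GammaLag4
    simp [pderiv_sum]
  · intro i
    unfold GammaLag4
    rw [Finset.sum_congr rfl fun j _ =>
      by rw [pderiv_sum j y, pderiv_z i j y hS.ne']]
    rw [sum_ite_split i (fun j t => y j * 1 * ((t * (∑ k, y k) - y i) / (∑ k, y k) ^ 2))]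
    rw [← Finset.sum_mul]
    field_simp
    ring
  · intro i j
    unfold GammaLag4
    rw [Finset.sum_congr rfl fun k _ => by rw [pderiv_z i k y hS.ne', pderiv_z j k y hS.ne']]
    rw [sum_ite_split i (fun k t => y k * ((t * (∑ l, y l) - y i) / (∑ l, y l) ^ 2)
      * (((if j = k then 1 else 0) * (∑ l, y l) - y j) / (∑ l, y l) ^ 2))]
    rw [sum_ite_split j (fun k t => y k * ((0 * (∑ l, y l) - y i) / (∑ l, y l) ^ 2)
      * ((t * (∑ l, y l) - y j) / (∑ l, y l) ^ 2))]
    rw [← Finset.sum_mul, ← Finset.sum_mul]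
    by_cases h : i = j
    · simp only [h, if_pos rfl, ↓reduceIte]
      field_simp
      ring
    · simp only [if_neg h, if_neg (fun hji : j = i => h hji.symm)]
      field_simp
      ring
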